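/- Any Kasteleyn matrix with complex unimodular signs is diagonally equivalent (via diagonal matrices with unimodular entries) to a Kasteleyn matrix with real signs ±1. That is, if c: E → U(1) satisfies that the alternating product of c around every bounded face of degree 2ℓ equals (-1)^{ℓ+1}, then there exist unimodular functions g: W → U(1), h: B → U(1) such that g(w) c_{wb} h(b) ∈ {±1} for every edge wb. -/

import Mathlib

/-- The cyclic successor on `Fin n`. -/
def cyc {n : ℕ} (i : Fin n) : Fin n := ⟨(i.1 + 1) % n, Nat.mod_lt _ i.pos⟩

/-- The alternating product of a complex edge function `c` around a face with white
vertices `wv f i` and black vertices `bv f i` in cyclic order (a face of degree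
`2 ℓ f`). -/
noncomputable def faceAltProd {W B F : Type} (ℓ : F → ℕ)
    (wv : (f : F) → Fin (ℓ f) → W) (bv : (f : F) → Fin (ℓ f) → B)
    (c : W → B → ℂ) (f : F) : ℂ :=
  (∏ i, c (wv f i) (bv f i)) / ∏ i, c (wv f (cyc i)) (bv f i)

/-- The 1-chain (element of `ℤ^{W×B}`) of a face. -/
def faceChain {W B F : Type} [DecidableEq W] [DecidableEq B] (ℓ : F → ℕ)
    (wv : (f : F) → Fin (ℓ f) → W) (bv : (f : F) → Fin (ℓ f) → B)
    (f : F) : W × B → ℤ :=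
  fun e => ∑ i, ((if (wv f i, bv f i) = e then (1 : ℤ) else 0)
    - (if (wv f (cyc i), bv f i) = e then (1 : ℤ) else 0))

section Aux

variable {W B : Type} [Fintype W] [Fintype B] [DecidableEq W] [DecidableEq B]

/-- The submodule of chains supported on edges. -/
def edgeSupp (E : W → B → Prop) : Submodule ℤ (W × B → ℤ) where
  carrier := {ch | ∀ w b, ¬ E w b → ch (w, b) = 0}
  add_mem' := by
    intro a b ha hb w b' hwb
    simp only [Pi.add_apply, ha w b' hwb, hb w b' hwb, add_zero]
  zero_mem' := fun w b _ => rfl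
  smul_mem' := by
    intro r ch hch w b hwb
    simp only [Pi.smul_apply, hch w b hwb, smul_zero]

/-- The boundary map sending a chain to its row and column sums. -/
def bdryMap : (W × B → ℤ) →ₗ[ℤ] ((W → ℤ) × (B → ℤ)) where
  toFun ch := (fun w => ∑ b, ch (w, b), fun b => ∑ w, ch (w, b))
  map_add' ch1 ch2 := by
    refine Prod.ext ?_ ?_ <;> funext v <;>
      simp [Finset.sum_add_distrib]
  map_smul' r ch := by
    refine Prod.ext ?_ ?_ <;> funext v <;>
      simp [Finset.mul_sum]

/-- Pairing a chain with an `AddCircle`-valued edge weight. -/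
noncomputable def chainPair (u : W × B → AddCircle Real.pi) :
    (W × B → ℤ) →ₗ[ℤ] AddCircle Real.pi where
  toFun ch := ∑ e : W × B, ch e • u e
  map_add' ch1 ch2 := by
    simp [add_smul, Finset.sum_add_distrib]
  map_smul' r ch := by
    simp [mul_smul, Finset.smul_sum]

theorem chainPair_single (u : W × B → AddCircle Real.pi) (e : W × B) :
    chainPair u (Pi.single e 1) = u e := by
  show (∑ e' : W × B, (Pi.single e 1 : W × B → ℤ) e' • u e') = u e
  rw [Finset.sum_eq_single e]
  · simp
  · intro e' _ he'
    simp [Pi.single_apply, he']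
  · intro h; exact absurd (Finset.mem_univ e) h

end Aux

/-- Any Kasteleyn sign function with complex unimodular signs is diagonally
(gauge) equivalent to one with real signs `±1`: if `c : E → U(1)` satisfies that the
alternating product of `c` around every bounded face of degree `2ℓ` equals `(-1)^{ℓ+1}`,
then there exist unimodular vertex functions `g : W → U(1)`, `h : B → U(1)` such that
`g(w) c(w,b) h(b) ∈ {±1}` for every edge `wb`. (The disk embedding is encoded by the
hypothesis that the bounded faces generate the cycle space.) -/
theorem complex_signs_gauge_to_real_signs
    {W B F : Type} [Fintype W] [Fintype B] [Fintype F]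
    [DecidableEq W] [DecidableEq B]
    (E : W → B → Prop)
    (ℓ : F → ℕ) (hℓ : ∀ f, 1 ≤ ℓ f)
    (wv : (f : F) → Fin (ℓ f) → W) (bv : (f : F) → Fin (ℓ f) → B)
    (hfaceE : ∀ f i, E (wv f i) (bv f i) ∧ E (wv f (cyc i)) (bv f i))
    (hgen : ∀ ch : W × B → ℤ, (∀ w b, ¬ E w b → ch (w, b) = 0) →
      (∀ w, ∑ b, ch (w, b) = 0) → (∀ b, ∑ w, ch (w, b) = 0) →
      ch ∈ Submodule.span ℤ (Set.range (faceChain ℓ wv bv)))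
    (c : W → B → ℂ)
    (hunimod : ∀ w b, E w b → ‖c w b‖ = 1)
    (hKast : ∀ f : F, faceAltProd ℓ wv bv c f = (-1 : ℂ) ^ (ℓ f + 1)) :
    ∃ g : W → ℂ, ∃ h : B → ℂ,
      (∀ w, ‖g w‖ = 1) ∧ (∀ b, ‖h b‖ = 1) ∧
      ∀ w b, E w b → g w * c w b * h b = 1 ∨ g w * c w b * h b = -1 := by
  classical
  haveI : Fact (0 < Real.pi) := ⟨Real.pi_pos⟩
  set θ : W × B → ℝ := fun e => (c e.1 e.2).arg with hθdef
  have hc : ∀ w b, E w b → c w b = Complex.exp ((θ (w, b) : ℝ) * Complex.I) := by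
    intro w b h
    have h1 := Complex.norm_mul_exp_arg_mul_I (c w b)
    rw [hunimod w b h, Complex.ofReal_one, one_mul] at h1
    exact h1.symm
  have key : ∀ (n : ℕ) (v : Fin n → ℝ),
      ((∑ i, v i : ℝ) : ℂ) * Complex.I = ∑ i, ((v i : ℂ) * Complex.I) := by
    intro n v; push_cast; rw [Finset.sum_mul]
  -- the alternating sum of θ around each face is an integer multiple of π
  have hface : ∀ f : F, ∃ k : ℤ,
      ((∑ i, θ (wv f i, bv f i)) - ∑ i, θ (wv f (cyc i), bv f i)) = k * Real.pi := by
    intro f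
    have h2 := hKast f
    rw [faceAltProd] at h2
    have e1 : (∏ i, c (wv f i) (bv f i)) =
        Complex.exp ((∑ i, θ (wv f i, bv f i) : ℝ) * Complex.I) := by
      rw [key, Complex.exp_sum]
      exact Finset.prod_congr rfl fun i _ => hc _ _ (hfaceE f i).1
    have e2 : (∏ i, c (wv f (cyc i)) (bv f i)) =
        Complex.exp ((∑ i, θ (wv f (cyc i), bv f i) : ℝ) * Complex.I) := by
      rw [key, Complex.exp_sum]
      exact Finset.prod_congr rfl fun i _ => hc _ _ (hfaceE f i).2
    rw [e1, e2, ← Complex.exp_sub] at h2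
    have e3 : ((∑ i, θ (wv f i, bv f i) : ℝ) : ℂ) * Complex.I -
        ((∑ i, θ (wv f (cyc i), bv f i) : ℝ) : ℂ) * Complex.I =
        (((∑ i, θ (wv f i, bv f i)) - ∑ i, θ (wv f (cyc i), bv f i) : ℝ) : ℂ) * Complex.I := by
      push_cast; ring
    rw [e3] at h2
    have e4 : ((-1 : ℂ)) ^ (ℓ f + 1) =
        Complex.exp (((ℓ f + 1 : ℕ) : ℂ) * ((Real.pi : ℂ) * Complex.I)) := by
      rw [Complex.exp_nat_mul, Complex.exp_pi_mul_I]
    rw [e4, Complex.exp_eq_exp_iff_exists_int] at h2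
    obtain ⟨n, hn⟩ := h2
    refine ⟨(ℓ f + 1 : ℤ) + 2 * n, ?_⟩
    have h5 := congrArg Complex.im hn
    simp [Complex.add_im, Complex.mul_im, Complex.mul_re] at h5
    push_cast at h5 ⊢
    linarith
  -- the projection ℝ → ℝ/πℤ
  set m : ℝ →+ AddCircle Real.pi :=
    QuotientAddGroup.mk' (AddSubgroup.zmultiples Real.pi) with hmdef
  have hm0 : ∀ x : ℝ, (∃ k : ℤ, x = k * Real.pi) → m x = 0 := by
    rintro x ⟨k, hk⟩
    rw [hmdef, QuotientAddGroup.mk'_apply, QuotientAddGroup.eq_zero_iff]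
    exact AddSubgroup.mem_zmultiples_iff.mpr ⟨k, by rw [zsmul_eq_mul, hk]⟩
  set Θ : (W × B → ℤ) →ₗ[ℤ] AddCircle Real.pi := chainPair (fun e => m (θ e)) with hΘdef
  -- Θ vanishes on face chains
  have hΘface : ∀ f : F, Θ (faceChain ℓ wv bv f) = 0 := by
    intro f
    have h1 : ∀ p : W × B,
        (∑ e : W × B, (if p = e then (1 : ℤ) else 0) • m (θ e)) = m (θ p) := by
      intro p
      simp [ite_smul, Finset.sum_ite_eq]
    calc Θ (faceChain ℓ wv bv f)
        = ∑ e : W × B, (∑ i : Fin (ℓ f), ((if (wv f i, bv f i) = e then (1 : ℤ) else 0)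
            - (if (wv f (cyc i), bv f i) = e then (1 : ℤ) else 0))) • m (θ e) := rfl
      _ = ∑ i : Fin (ℓ f), ∑ e : W × B,
            ((if (wv f i, bv f i) = e then (1 : ℤ) else 0) • m (θ e)
            - (if (wv f (cyc i), bv f i) = e then (1 : ℤ) else 0) • m (θ e)) := by
          rw [Finset.sum_comm]
          exact Finset.sum_congr rfl fun e _ => by
            rw [Finset.sum_smul]
            exact Finset.sum_congr rfl fun i _ => sub_smul _ _ _
      _ = ∑ i : Fin (ℓ f), (m (θ (wv f i, bv f i)) - m (θ (wv f (cyc i), bv f i))) := by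
          refine Finset.sum_congr rfl fun i _ => ?_
          rw [Finset.sum_sub_distrib, h1, h1]
      _ = m ((∑ i, θ (wv f i, bv f i)) - ∑ i, θ (wv f (cyc i), bv f i)) := by
          rw [map_sub, map_sum, map_sum, Finset.sum_sub_distrib]
      _ = 0 := hm0 _ (hface f)
  -- factor Θ through the boundary map on edge-supported chains and extend
  set D : edgeSupp E →ₗ[ℤ] ((W → ℤ) × (B → ℤ)) :=
    bdryMap.comp (edgeSupp E).subtype with hDdef
  set Θ' : edgeSupp E →ₗ[ℤ] AddCircle Real.pi := Θ.comp (edgeSupp E).subtype with hΘ'def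
  have hker : LinearMap.ker D ≤ LinearMap.ker Θ' := by
    intro ch hch
    rw [LinearMap.mem_ker] at hch ⊢
    have hrow : ∀ w, ∑ b, (ch : W × B → ℤ) (w, b) = 0 := by
      intro w
      have := congrArg (fun p => p.1 w) hch
      simpa [hDdef, bdryMap] using this
    have hcol : ∀ b, ∑ w, (ch : W × B → ℤ) (w, b) = 0 := by
      intro b
      have := congrArg (fun p => p.2 b) hch
      simpa [hDdef, bdryMap] using this
    have hmem := hgen (ch : W × B → ℤ) ch.2 hrow hcol
    have hspan : Submodule.span ℤ (Set.range (faceChain ℓ wv bv)) ≤ LinearMap.ker Θ := by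
      rw [Submodule.span_le]
      rintro _ ⟨f, rfl⟩
      exact hΘface f
    exact hspan hmem
  obtain ⟨ψ, hψ⟩ := (Module.Baer.of_divisible (AddCircle Real.pi)).injective.out
    (LinearMap.range D).subtype Subtype.coe_injective
    (((LinearMap.ker D).liftQ Θ' hker).comp D.quotKerEquivRange.symm.toLinearMap)
  have hψD : ∀ ch : edgeSupp E, ψ (D ch) = Θ (ch : W × B → ℤ) := by
    intro ch
    have h1 := hψ ⟨D ch, LinearMap.mem_range_self D ch⟩
    have h2 : (LinearMap.range D).subtype ⟨D ch, LinearMap.mem_range_self D ch⟩ = D ch := rfl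
    rw [h2] at h1
    rw [h1]
    simp only [LinearMap.coe_comp, Function.comp_apply, LinearEquiv.coe_coe]
    rw [LinearMap.quotKerEquivRange_symm_apply_image, Submodule.mkQ_apply,
      Submodule.liftQ_apply]
    rfl
  -- evaluate on single-edge chains
  have hedge : ∀ w b, E w b →
      ψ ((Pi.single w 1 : W → ℤ), (0 : B → ℤ)) + ψ ((0 : W → ℤ), (Pi.single b 1 : B → ℤ))
        = m (θ (w, b)) := by
    intro w b hwb
    have hδ : (Pi.single (w, b) 1 : W × B → ℤ) ∈ edgeSupp E := by
      intro w' b' hw'b'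
      have hne : (w', b') ≠ (w, b) := by
        intro h
        rw [Prod.mk.injEq] at h
        exact hw'b' (h.1 ▸ h.2 ▸ hwb)
      simp [Pi.single_apply, hne]
    have hD : D ⟨_, hδ⟩ = ((Pi.single w 1 : W → ℤ), (Pi.single b 1 : B → ℤ)) := by
      refine Prod.ext ?_ ?_ <;> funext v
      · show (∑ b', (Pi.single (w, b) 1 : W × B → ℤ) (v, b')) = (Pi.single w 1 : W → ℤ) v
        rcases eq_or_ne v w with rfl | hv
        · simp [Pi.single_apply, Prod.ext_iff]
        · simp [Pi.single_apply, Prod.ext_iff, hv]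
      · show (∑ w', (Pi.single (w, b) 1 : W × B → ℤ) (w', v)) = (Pi.single b 1 : B → ℤ) v
        rcases eq_or_ne v b with rfl | hv
        · simp [Pi.single_apply, Prod.ext_iff]
        · simp [Pi.single_apply, Prod.ext_iff, hv]
    have h1 : ψ (D ⟨_, hδ⟩) = m (θ (w, b)) := by
      rw [hψD]
      exact chainPair_single _ (w, b)
    rw [hD] at h1
    rw [← h1]
    have h3 : ((Pi.single w 1 : W → ℤ), (Pi.single b 1 : B → ℤ)) =
        ((Pi.single w 1 : W → ℤ), (0 : B → ℤ)) + ((0 : W → ℤ), (Pi.single b 1 : B → ℤ)) := by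
      simp [Prod.ext_iff]
    rw [h3, map_add]
  -- lift the vertex phases to ℝ
  choose x hx using fun w : W =>
    QuotientAddGroup.mk'_surjective (AddSubgroup.zmultiples Real.pi)
      (ψ ((Pi.single w 1 : W → ℤ), (0 : B → ℤ)))
  choose y hy using fun b : B =>
    QuotientAddGroup.mk'_surjective (AddSubgroup.zmultiples Real.pi)
      (ψ ((0 : W → ℤ), (Pi.single b 1 : B → ℤ)))
  refine ⟨fun w => Complex.exp ((-(x w) : ℝ) * Complex.I),
          fun b => Complex.exp ((-(y b) : ℝ) * Complex.I), ?_, ?_, ?_⟩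
  · intro w; exact Complex.norm_exp_ofReal_mul_I _
  · intro b; exact Complex.norm_exp_ofReal_mul_I _
  · intro w b hwb
    have hsum : ∃ k : ℤ, θ (w, b) - x w - y b = k * Real.pi := by
      have h0 : m (θ (w, b) - x w - y b) = 0 := by
        rw [map_sub, map_sub]
        have hxw : m (x w) = ψ ((Pi.single w 1 : W → ℤ), (0 : B → ℤ)) := hx w
        have hyb : m (y b) = ψ ((0 : W → ℤ), (Pi.single b 1 : B → ℤ)) := hy b
        rw [hxw, hyb, ← hedge w b hwb]
        abel
      rw [hmdef, QuotientAddGroup.mk'_apply, QuotientAddGroup.eq_zero_iff] at h0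
      obtain ⟨k, hk⟩ := AddSubgroup.mem_zmultiples_iff.mp h0
      exact ⟨k, by rw [← hk, zsmul_eq_mul]⟩
    obtain ⟨k, hk⟩ := hsum
    have hprod : Complex.exp ((-(x w) : ℝ) * Complex.I) * c w b *
        Complex.exp ((-(y b) : ℝ) * Complex.I)
        = Complex.exp (((θ (w, b) - x w - y b : ℝ)) * Complex.I) := by
      rw [hc w b hwb, ← Complex.exp_add, ← Complex.exp_add]
      congr 1
      push_cast
      ring
    rw [hprod, hk]
    have hfin : Complex.exp (((k * Real.pi : ℝ)) * Complex.I) = (-1 : ℂ) ^ k := by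
      push_cast
      rw [show ((k : ℂ) * (Real.pi : ℂ) * Complex.I) =
        (k : ℂ) * ((Real.pi : ℂ) * Complex.I) by ring,
        Complex.exp_int_mul, Complex.exp_pi_mul_I]
    rw [hfin]
    rcases Int.even_or_odd k with he | ho
    · left; exact he.neg_one_zpow
    · right; exact ho.neg_one_zpow
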